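/- arXiv:1212.1724 — 3 statements merged into one kernel-verified Lean document; each statement's English description precedes it below -/
import Mathlib

section
/- Let X be a finite simple graph, n ≥ 1 an integer, and α < 0. If there is a quantum homomorphism from the complete graph K_n to X, and there exist m ≥ 1 and unit vectors v_x ∈ ℝ^m (x ∈ V(X)) with v_x · v_{x'} = α whenever x,x' are adjacent in X, then n ≤ 1 − 1/α. In other words, the quantum clique number satisfies ω_q(X) ≤ ϑ̄(X). -/
open Matrix Finset

/-- A quantum homomorphism from `X` to `Y`: for some `d ≥ 1` there are complex `d × d`
projectors `E x y` (Hermitian idempotents) with `∑ y, E x y = 1` for every `x`,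
`E x y * E x y' = 0` whenever `y ≠ y'`, and `E x y * E x' y' = 0` whenever `x, x'`
are adjacent in `X` and `y, y'` are equal or nonadjacent in `Y`. -/
def IsQuantumHom {V W : Type} [Fintype V] [Fintype W]
    (X : SimpleGraph V) (Y : SimpleGraph W) : Prop :=
  ∃ d : ℕ, 0 < d ∧ ∃ E : V → W → Matrix (Fin d) (Fin d) ℂ,
    (∀ x y, (E x y).IsHermitian ∧ E x y * E x y = E x y) ∧
    (∀ x, ∑ y, E x y = 1) ∧
    (∀ x y y', y ≠ y' → E x y * E x y' = 0) ∧
    (∀ x x' y y', X.Adj x x' → ¬ Y.Adj y y' → E x y * E x' y' = 0)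

/-- The homomorphic product `X ⋉ Y`: distinct vertices `(x,y)` and `(x',y')` are adjacent
iff `x = x'`, or (`x ~ x'` in `X` and `y, y'` are equal or nonadjacent in `Y`). -/
def homProd {V W : Type} (X : SimpleGraph V) (Y : SimpleGraph W) :
    SimpleGraph (V × W) where
  Adj a b := a ≠ b ∧ (a.1 = b.1 ∨ (X.Adj a.1 b.1 ∧ ¬ Y.Adj a.2 b.2))
  symm := by
    constructor
    rintro a b ⟨hne, h⟩
    refine ⟨hne.symm, ?_⟩
    rcases h with h | ⟨h1, h2⟩
    · exact Or.inl h.symm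
    · exact Or.inr ⟨h1.symm, fun hb => h2 hb.symm⟩
  loopless := ⟨fun a ha => ha.1 rfl⟩

/-- The independence number: the largest size of a set of pairwise nonadjacent vertices. -/
noncomputable def indepNum {U : Type} [Fintype U] (Z : SimpleGraph U) : ℕ :=
  sSup {n | ∃ s : Finset U, s.card = n ∧ ∀ a ∈ s, ∀ b ∈ s, a ≠ b → ¬ Z.Adj a b}


lemma trace_sq_re_nonneg {d : ℕ} (A : Matrix (Fin d) (Fin d) ℂ) (hA : A.IsHermitian) :
    0 ≤ (Matrix.trace (A * A)).re := by
  have h1 : A * A = Aᴴ * A := by rw [hA.eq]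
  have h2 : Matrix.trace (Aᴴ * A) = ∑ j, ∑ i, ((starRingEnd ℂ) (A i j)) * A i j := by
    simp [Matrix.trace, Matrix.mul_apply, Matrix.diag, Matrix.conjTranspose_apply]
  rw [h1, h2]
  simp only [Complex.conj_mul', Complex.re_sum]
  apply Finset.sum_nonneg; intro j _
  apply Finset.sum_nonneg; intro i _
  rw [← Complex.ofReal_pow, Complex.ofReal_re]; positivity

/-- If `K_n →q X` and `X` has an `α`-representation (`α < 0`), then
`n ≤ 1 - 1/α`; i.e. `ω_q(X) ≤ ϑ̄(X)`. -/
theorem qClique_le_theta {V : Type} [Fintype V]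
    (X : SimpleGraph V) (n : ℕ) (hn : 1 ≤ n) (α : ℝ) (hα : α < 0)
    (hq : IsQuantumHom (⊤ : SimpleGraph (Fin n)) X)
    (hrep : ∃ m : ℕ, 1 ≤ m ∧ ∃ v : V → (Fin m → ℝ),
      (∀ x, ∑ i, v x i * v x i = 1) ∧
      (∀ x x', X.Adj x x' → ∑ i, v x i * v x' i = α)) :
    (n : ℝ) ≤ 1 - 1 / α := by
  obtain ⟨d, hd, E, hEh, hEsum, hEorth, hEadj⟩ := hq
  obtain ⟨m, hm, v, hvunit, hvadj⟩ := hrep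
  set g : Fin n → Fin n → ℂ := fun i j => ∑ y, ∑ y',
    ((∑ k, v y k * v y' k : ℝ) : ℂ) * Matrix.trace (E i y * E j y') with hgdef
  have hgdiag : ∀ i, g i i = (d : ℂ) := by
    intro i
    have h1 : ∀ y : V, ∑ y', ((∑ k, v y k * v y' k : ℝ) : ℂ) * Matrix.trace (E i y * E i y')
        = Matrix.trace (E i y) := by
      intro y
      rw [Finset.sum_eq_single y]
      · rw [hvunit y, (hEh i y).2]; push_cast; ring
      · intro y' _ hy'
        rw [hEorth i y y' hy'.symm, Matrix.trace_zero, mul_zero]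
      · simp
    simp only [hgdef, h1]
    rw [← Matrix.trace_sum, hEsum i, Matrix.trace_one]
    simp
  have hgoff : ∀ i j, i ≠ j → g i j = (α : ℂ) * d := by
    intro i j hij
    have hadj : (⊤ : SimpleGraph (Fin n)).Adj i j := by simpa using hij
    have h1 : ∀ y y' : V, ((∑ k, v y k * v y' k : ℝ) : ℂ) * Matrix.trace (E i y * E j y')
        = (α : ℂ) * Matrix.trace (E i y * E j y') := by
      intro y y'
      by_cases h : X.Adj y y'
      · rw [hvadj y y' h]
      · rw [hEadj i j y y' hadj h, Matrix.trace_zero, mul_zero, mul_zero]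
    simp only [hgdef, h1, ← Finset.mul_sum]
    congr 1
    have hms : (∑ y, E i y) * (∑ y', E j y') = ∑ y, ∑ y', E i y * E j y' := by
      rw [Finset.sum_mul_sum]
    calc ∑ y, ∑ y', Matrix.trace (E i y * E j y')
        = Matrix.trace ((∑ y, E i y) * (∑ y', E j y')) := by
          rw [hms, Matrix.trace_sum]
          exact Finset.sum_congr rfl fun y _ => (Matrix.trace_sum _ _).symm
      _ = (d : ℂ) := by rw [hEsum i, hEsum j, one_mul, Matrix.trace_one]; simp
  set M : Fin m → Matrix (Fin d) (Fin d) ℂ :=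
    fun k => ∑ p : Fin n × V, ((v p.2 k : ℝ) : ℂ) • E p.1 p.2 with hMdef
  have hMherm : ∀ k, (M k).IsHermitian := by
    intro k
    show (M k)ᴴ = M k
    rw [hMdef, Matrix.conjTranspose_sum]
    refine Finset.sum_congr rfl fun p _ => ?_
    rw [Matrix.conjTranspose_smul, (hEh p.1 p.2).1.eq, Complex.star_def, Complex.conj_ofReal]
  have htr : ∀ k, Matrix.trace (M k * M k) = ∑ p : Fin n × V, ∑ q : Fin n × V,
      ((v p.2 k * v q.2 k : ℝ) : ℂ) * Matrix.trace (E p.1 p.2 * E q.1 q.2) := by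
    intro k
    rw [hMdef]
    rw [Finset.sum_mul_sum, Matrix.trace_sum]
    refine Finset.sum_congr rfl fun p _ => ?_
    rw [Matrix.trace_sum]
    refine Finset.sum_congr rfl fun q _ => ?_
    rw [smul_mul_smul_comm, Matrix.trace_smul, smul_eq_mul]
    push_cast; ring
  have hS : ∑ k, Matrix.trace (M k * M k) = ∑ i, ∑ j, g i j := by
    calc ∑ k, Matrix.trace (M k * M k)
        = ∑ k, ∑ p : Fin n × V, ∑ q : Fin n × V,
            ((v p.2 k * v q.2 k : ℝ) : ℂ) * Matrix.trace (E p.1 p.2 * E q.1 q.2) :=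
          Finset.sum_congr rfl fun k _ => htr k
      _ = ∑ p : Fin n × V, ∑ q : Fin n × V, ∑ k,
            ((v p.2 k * v q.2 k : ℝ) : ℂ) * Matrix.trace (E p.1 p.2 * E q.1 q.2) := by
          rw [Finset.sum_comm]
          exact Finset.sum_congr rfl fun p _ => Finset.sum_comm
      _ = ∑ p : Fin n × V, ∑ q : Fin n × V,
            ((∑ k, v p.2 k * v q.2 k : ℝ) : ℂ) * Matrix.trace (E p.1 p.2 * E q.1 q.2) := by
          refine Finset.sum_congr rfl fun p _ => Finset.sum_congr rfl fun q _ => ?_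
          rw [← Finset.sum_mul]; push_cast; ring
      _ = ∑ i, ∑ j, g i j := by
          rw [Fintype.sum_prod_type]
          refine Finset.sum_congr rfl fun i _ => ?_
          simp only [Fintype.sum_prod_type, hgdef]
          exact Finset.sum_comm
  have hpos : 0 ≤ (∑ i, ∑ j, g i j).re := by
    rw [← hS, Complex.re_sum]
    exact Finset.sum_nonneg fun k _ => trace_sq_re_nonneg (M k) (hMherm k)
  have hval : ∑ i, ∑ j, g i j = (((n : ℝ) * d + (n : ℝ) * ((n : ℝ) - 1) * (α * d) : ℝ) : ℂ) := by
    have hrow : ∀ i : Fin n, ∑ j, g i j = (d : ℂ) + ((n : ℂ) - 1) * ((α : ℂ) * d) := by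
      intro i
      have h2 : ∀ j, g i j = ((α : ℂ) * d) + (if i = j then (d : ℂ) - (α : ℂ) * d else 0) := by
        intro j; by_cases h : i = j
        · subst h; simp [hgdiag i]
        · simp [h, hgoff i j h]
      simp only [h2, Finset.sum_add_distrib, Finset.sum_const, Finset.sum_ite_eq,
        Finset.card_univ, Finset.mem_univ, if_true, Fintype.card_fin, nsmul_eq_mul]
      ring
    simp only [hrow, Finset.sum_const, Finset.card_univ, Fintype.card_fin, nsmul_eq_mul]
    push_cast; ring
  rw [hval, Complex.ofReal_re] at hpos
  have hd' : (0 : ℝ) < d := by exact_mod_cast hd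
  have hn' : (0 : ℝ) < n := by exact_mod_cast hn
  have key : (0 : ℝ) ≤ 1 + ((n : ℝ) - 1) * α := by nlinarith [mul_pos hn' hd']
  have h3 : (n : ℝ) - 1 ≤ (-1) / α := by
    rw [le_div_iff_of_neg hα]; nlinarith
  have h4 : (-1 : ℝ) / α = -(1 / α) := by ring
  linarith
end

section
/- Let X be a finite simple graph and c ≥ 1 an integer. If there is a quantum homomorphism from X to the complete graph K_c, then X has a projective representation of value c: there exist r ≥ 1 and rank-r complex d×d projectors F_x (x ∈ V(X)) with d = c·r such that F_x·F_{x'} = 0 whenever x,x' are adjacent in X. Consequently ξ_f(X) ≤ χ_q(X). -/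
open Matrix Finset

lemma trace_eq_rank_of_proj {n : ℕ} {P : Matrix (Fin n) (Fin n) ℂ}
    (hH : P.IsHermitian) (hI : P * P = P) : P.trace = (P.rank : ℂ) := by
  classical
  set U : Matrix (Fin n) (Fin n) ℂ := (hH.eigenvectorUnitary : Matrix (Fin n) (Fin n) ℂ) with hU
  have hUU : U * star U = 1 := (Matrix.mem_unitaryGroup_iff).mp hH.eigenvectorUnitary.2
  have hD : star U * P * U = diagonal (RCLike.ofReal ∘ hH.eigenvalues) :=
    by have := hH.conjStarAlgAut_star_eigenvectorUnitary
       rw [Unitary.conjStarAlgAut_apply] at this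
       simpa [hU] using this
  have hDD : (star U * P * U) * (star U * P * U) = star U * P * U := by
    calc (star U * P * U) * (star U * P * U)
        = star U * P * ((U * star U) * (P * U)) := by simp only [mul_assoc]
      _ = star U * (P * (P * U)) := by rw [hUU, one_mul, mul_assoc]
      _ = star U * ((P * P) * U) := by simp only [mul_assoc]
      _ = star U * P * U := by rw [hI, mul_assoc]
  rw [hD] at hDD
  rw [diagonal_mul_diagonal] at hDD
  have hev : ∀ i, hH.eigenvalues i = 0 ∨ hH.eigenvalues i = 1 := by
    intro i
    have h2' := Matrix.ext_iff.mpr hDD i i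
    simp only [diagonal_apply_eq, Function.comp_apply] at h2'
    have h2 : (hH.eigenvalues i : ℂ) * hH.eigenvalues i = hH.eigenvalues i := h2'
    have h3 : hH.eigenvalues i * hH.eigenvalues i = hH.eigenvalues i := by exact_mod_cast h2
    have h4 : hH.eigenvalues i * (hH.eigenvalues i - 1) = 0 := by ring_nf; linarith [h3]
    rcases mul_eq_zero.mp h4 with h | h
    · exact Or.inl h
    · exact Or.inr (by linarith)
  have htr : P.trace = ∑ i, (hH.eigenvalues i : ℂ) := by
    have : (star U * P * U).trace = P.trace := by
      rw [trace_mul_comm, ← mul_assoc, hUU, one_mul]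
    rw [← this, hD, trace_diagonal]
    rfl
  rw [hH.rank_eq_card_non_zero_eigs, htr]
  rw [Fintype.card_subtype]
  push_cast
  rw [Finset.card_eq_sum_ones]
  push_cast
  rw [Finset.sum_filter]
  apply Finset.sum_congr rfl
  intro i _
  rcases hev i with h | h <;> simp [h]


/-- If `X →q K_c`, then `X` has a projective representation of value `c`;
consequently `ξ_f(X) ≤ χ_q(X)`. -/
theorem projRep_of_quantum_coloring {V : Type} [Fintype V]
    (X : SimpleGraph V) (c : ℕ) (hc : 1 ≤ c)
    (hq : IsQuantumHom X (⊤ : SimpleGraph (Fin c))) :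
    ∃ r : ℕ, 1 ≤ r ∧ ∃ F : V → Matrix (Fin (c * r)) (Fin (c * r)) ℂ,
      (∀ x, (F x).IsHermitian ∧ F x * F x = F x ∧ (F x).rank = r) ∧
      (∀ x x', X.Adj x x' → F x * F x' = 0) := by
  obtain ⟨d, hd, E, hproj, hsum, -, hadj⟩ := hq
  refine ⟨d, hd, ?_⟩
  let e : Fin (c * d) ≃ Fin d × Fin c :=
    (finCongr (Nat.mul_comm c d)).trans finProdFinEquiv.symm
  refine ⟨fun x => (blockDiagonal (fun y => E x y)).submatrix e e, ?_, ?_⟩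
  · intro x
    have hherm : (blockDiagonal fun y => E x y).IsHermitian := by
      have h1 : (fun y => (E x y)ᴴ) = fun y => E x y := funext fun y => (hproj x y).1
      rw [Matrix.IsHermitian, blockDiagonal_conjTranspose, h1]
    have hidem : (blockDiagonal fun y => E x y) * (blockDiagonal fun y => E x y)
        = blockDiagonal fun y => E x y := by
      have h1 : (fun y => E x y * E x y) = fun y => E x y := funext fun y => (hproj x y).2
      rw [← blockDiagonal_mul, h1]
    refine ⟨?_, ?_, ?_⟩
    · rw [Matrix.IsHermitian, conjTranspose_submatrix, hherm]
    · rw [submatrix_mul_equiv, hidem]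
    · have hH : ((blockDiagonal fun y => E x y).submatrix e e).IsHermitian := by
        rw [Matrix.IsHermitian, conjTranspose_submatrix, hherm]
      have htr := trace_eq_rank_of_proj hH
        (by rw [submatrix_mul_equiv, hidem])
      have htr2 : ((blockDiagonal fun y => E x y).submatrix e e).trace
          = (blockDiagonal fun y => E x y).trace := by
        rw [Matrix.trace, Matrix.trace]
        simp only [diag_apply, submatrix_apply]
        exact Fintype.sum_equiv e _ _ (fun i => rfl)
      have htr3 : (blockDiagonal fun y => E x y).trace = (d : ℂ) := by
        rw [trace_blockDiagonal, ← trace_sum, hsum x, trace_one]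
        simp
      rw [htr2, htr3] at htr
      exact_mod_cast htr.symm
  · intro x x' hxx'
    rw [submatrix_mul_equiv, ← blockDiagonal_mul]
    have h0 : (fun y => E x y * E x' y) = 0 := by
      funext y
      exact hadj x x' y y hxx' (by simp)
    rw [h0, blockDiagonal_zero, submatrix_zero]
    rfl
end

section
/- Let X and Y be finite simple graphs with a quantum homomorphism from X to Y, and suppose Y has a d/r-projective representation (d, r ≥ 1). Then X has a projective representation of the same value d/r: explicitly, if E_{x,y} ∈ M_{d'}(ℂ) are projectors giving the quantum homomorphism and F_y ∈ M_d(ℂ) are rank-r projectors with F_y·F_{y'} = 0 for adjacent y,y', then the matrices F_x := Σ_{y ∈ V(Y)} E_{x,y} ⊗ F_y are projectors of rank r·d' in M_{d·d'}(ℂ) satisfying F_x·F_{x'} = 0 whenever x,x' are adjacent in X. Consequently ξ_f(X) ≤ ξ_f(Y). -/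
open Matrix Finset

/-- The trace of an idempotent complex matrix equals its rank. -/
lemma trace_eq_rank_of_idem {n : Type} [Fintype n] [DecidableEq n]
    (M : Matrix n n ℂ) (h : M * M = M) : M.trace = (M.rank : ℂ) := by
  have hf : M.mulVecLin ∘ₗ M.mulVecLin = M.mulVecLin := by
    rw [← Matrix.mulVecLin_mul, h]
  obtain ⟨p, hp⟩ := (LinearMap.isProj_iff_isIdempotentElem _).mpr hf
  have hrange : p = LinearMap.range M.mulVecLin := by
    apply le_antisymm
    · intro x hx; exact ⟨x, hp.map_id x hx⟩
    · rintro _ ⟨y, rfl⟩; exact hp.map_mem y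
  have ht := hp.trace
  rw [LinearMap.trace_eq_matrix_trace ℂ (Pi.basisFun ℂ n),
    LinearMap.toMatrix_eq_toMatrix', ← Matrix.toLin'_apply',
    LinearMap.toMatrix'_toLin'] at ht
  rw [ht, hrange]
  rfl

open Kronecker in
lemma kron_conjT {m n : Type} [Fintype m] [Fintype n]
    (A : Matrix m m ℂ) (B : Matrix n n ℂ) : (A ⊗ₖ B)ᴴ = Aᴴ ⊗ₖ Bᴴ := by
  ext ⟨i₁, i₂⟩ ⟨j₁, j₂⟩
  simp [Matrix.conjTranspose_apply, mul_comm]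

open Kronecker in
/-- If `E x y` are projectors giving a quantum homomorphism `X →q Y` in
dimension `d'`, and `F y` is a `d/r`-projective representation of `Y`, then
`F' x := ∑ y, E x y ⊗ₖ F y` is a `(d·d')/(r·d')`-projective representation of `X` (same
value `d/r`); consequently `ξ_f(X) ≤ ξ_f(Y)`. -/
theorem projRep_of_quantumHom {V W : Type} [Fintype V] [Fintype W]
    (X : SimpleGraph V) (Y : SimpleGraph W) (d' d r : ℕ)
    (hd' : 1 ≤ d') (hd : 1 ≤ d) (hr : 1 ≤ r)
    (E : V → W → Matrix (Fin d') (Fin d') ℂ)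
    (hEproj : ∀ x y, (E x y).IsHermitian ∧ E x y * E x y = E x y)
    (hEsum : ∀ x, ∑ y, E x y = 1)
    (hEcons : ∀ x y y', y ≠ y' → E x y * E x y' = 0)
    (hEadj : ∀ x x' y y', X.Adj x x' → ¬ Y.Adj y y' → E x y * E x' y' = 0)
    (F : W → Matrix (Fin d) (Fin d) ℂ)
    (hFproj : ∀ y, (F y).IsHermitian ∧ F y * F y = F y ∧ (F y).rank = r)
    (hFadj : ∀ y y', Y.Adj y y' → F y * F y' = 0) :
    (∀ x, ((∑ y, E x y ⊗ₖ F y).IsHermitian ∧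
        (∑ y, E x y ⊗ₖ F y) * (∑ y, E x y ⊗ₖ F y) = ∑ y, E x y ⊗ₖ F y ∧
        (∑ y, E x y ⊗ₖ F y).rank = r * d')) ∧
    (∀ x x', X.Adj x x' →
        (∑ y, E x y ⊗ₖ F y) * (∑ y, E x' y ⊗ₖ F y) = 0) := by
  -- general expansion of the product of two such sums
  have expand : ∀ (x x' : V),
      (∑ y, E x y ⊗ₖ F y) * (∑ y, E x' y ⊗ₖ F y)
        = ∑ y, ∑ y', (E x y * E x' y') ⊗ₖ (F y * F y') := by
    intro x x'
    rw [Finset.sum_mul_sum]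
    simp_rw [Matrix.mul_kronecker_mul]
  have hidem : ∀ x, (∑ y, E x y ⊗ₖ F y) * (∑ y, E x y ⊗ₖ F y) = ∑ y, E x y ⊗ₖ F y := by
    intro x
    rw [expand]
    refine Finset.sum_congr rfl fun y _ => ?_
    rw [Finset.sum_eq_single y]
    · rw [(hEproj x y).2, (hFproj y).2.1]
    · intro y' _ hy'
      rw [hEcons x y y' (Ne.symm hy'), Matrix.zero_kronecker]
    · intro h; exact absurd (Finset.mem_univ y) h
  refine ⟨fun x => ?_, fun x x' hadj => ?_⟩
  · have hherm : (∑ y, E x y ⊗ₖ F y).IsHermitian := by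
      unfold Matrix.IsHermitian
      rw [Matrix.conjTranspose_sum]
      refine Finset.sum_congr rfl fun y _ => ?_
      rw [kron_conjT, (hEproj x y).1, (hFproj y).1]
    refine ⟨hherm, hidem x, ?_⟩
    -- rank = trace
    have htr : (∑ y, E x y ⊗ₖ F y).trace = ((r * d' : ℕ) : ℂ) := by
      rw [Matrix.trace_sum]
      have : ∀ y, (E x y ⊗ₖ F y).trace = (r : ℂ) * (E x y).trace := by
        intro y
        rw [Matrix.trace_kronecker]
        have h1 : (F y).trace = ((F y).rank : ℂ) :=
          trace_eq_rank_of_idem _ (hFproj y).2.1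
        rw [h1, (hFproj y).2.2, mul_comm]
      simp_rw [this, ← Finset.mul_sum, ← Matrix.trace_sum, hEsum x]
      simp [Matrix.trace_one, mul_comm]
    have h2 : ((∑ y, E x y ⊗ₖ F y).trace) = (((∑ y, E x y ⊗ₖ F y).rank : ℕ) : ℂ) :=
      trace_eq_rank_of_idem _ (hidem x)
    have := h2.symm.trans htr
    exact_mod_cast this
  · rw [expand]
    refine Finset.sum_eq_zero fun y _ => Finset.sum_eq_zero fun y' _ => ?_
    by_cases hY : Y.Adj y y'
    · rw [hFadj y y' hY, Matrix.kronecker_zero]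
    · rw [hEadj x x' y y' hadj hY, Matrix.zero_kronecker]
end
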